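/- In the algebra ℂ_{0,b;q}[x,y] with relations yx = q(1-bq)/(1-bq³)·xy, xb = q²bx, yb = qby, the (b;q)-binomial theorem holds: (x+y)^n = Σ_{k=0}^n [n choose k]_{0,b;q} x^k y^{n-k}, where [n choose k]_{0,b;q} = (q^{1+k}, bq^{1+k}; q)_{n-k} / (q, bq^{1+2k}; q)_{n-k}. -/

import Mathlib

/-- The `q`-shifted factorial `(a;q)_n = ∏_{j=0}^{n-1} (1 - a q^j)`. -/
def qPoch {K : Type*} [Field K] (a q : K) (n : ℕ) : K :=
  ∏ j ∈ Finset.range n, (1 - a * q ^ j)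

section aux
variable {K : Type*} [Field K]

lemma qPoch_zero (a q : K) : qPoch a q 0 = 1 := Finset.prod_range_zero _

lemma qPoch_succ (a q : K) (n : ℕ) : qPoch a q (n + 1) = qPoch a q n * (1 - a * q ^ n) :=
  Finset.prod_range_succ _ _

lemma qPoch_succ' (a q : K) (n : ℕ) : qPoch a q (n + 1) = (1 - a) * qPoch (a * q) q n := by
  rw [qPoch, Finset.prod_range_succ']
  simp only [pow_zero, mul_one]
  rw [mul_comm]
  congr 1
  apply Finset.prod_congr rfl
  intro j _
  ring_nf

lemma map_qPoch (φ : K →+* K) {q : K} (hq : φ q = q) (a : K) (n : ℕ) :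
    φ (qPoch a q n) = qPoch (φ a) q n := by
  rw [qPoch, qPoch, map_prod]
  exact Finset.prod_congr rfl fun j _ => by rw [map_sub, map_one, map_mul, map_pow, hq]

/-- abbreviation for the coefficient -/
def Cexpr (b q : K) (k j : ℕ) : K :=
  qPoch (q ^ (k + 1)) q j * qPoch (b * q ^ (k + 1)) q j /
    (qPoch q q j * qPoch (b * q ^ (2 * k + 1)) q j)

def dd (b q : K) (k : ℕ) : K := q ^ k * (1 - b * q) / (1 - b * q ^ (2 * k + 1))

end aux

section key
variable {K : Type*} [Field K] {b q : K}
  (hq1 : ∀ m : ℕ, q ^ (m + 1) ≠ 1) (hbq : ∀ m : ℕ, 1 - b * q ^ m ≠ 0)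

include hq1 in
lemma hq1' : ∀ m : ℕ, (1 : K) - q ^ (m + 1) ≠ 0 := fun m h => hq1 m (by
  have := sub_eq_zero.mp h; exact this.symm)

include hq1 in
lemma qPoch_q_ne (j : ℕ) : qPoch q q j ≠ 0 := by
  rw [qPoch]
  apply Finset.prod_ne_zero_iff.mpr
  intro i _
  have : q * q ^ i = q ^ (i + 1) := by ring
  rw [this]
  exact hq1' hq1 i

include hbq in
lemma qPoch_b_ne (m j : ℕ) : qPoch (b * q ^ m) q j ≠ 0 := by
  rw [qPoch]
  apply Finset.prod_ne_zero_iff.mpr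
  intro i _
  have : b * q ^ m * q ^ i = b * q ^ (m + i) := by rw [pow_add]; ring
  rw [this]
  exact hbq (m + i)

include hq1 hbq in
lemma Cexpr_zero (j : ℕ) : Cexpr b q 0 j = 1 := by
  rw [Cexpr]
  norm_num
  exact ⟨qPoch_q_ne hq1 j, by simpa using qPoch_b_ne hbq 1 j⟩

lemma Cexpr_top (k : ℕ) : Cexpr b q k 0 = (1 : K) := by
  simp [Cexpr, qPoch_zero]

include hbq in
lemma dd_zero : dd b q 0 = (1 : K) := by
  rw [dd]
  norm_num
  simpa using hbq 1

end key

section maps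
variable {K : Type*} [Field K] {b q : K} (σ τ : K →+* K)
  (hσb : σ b = b * q ^ 2) (hσq : σ q = q) (hτb : τ b = b * q) (hτq : τ q = q)

include hσb hσq in
lemma sigma_C (k j : ℕ) : σ (Cexpr b q k j) =
    qPoch (q ^ (k + 1)) q j * qPoch (b * q ^ (k + 3)) q j /
      (qPoch q q j * qPoch (b * q ^ (2 * k + 3)) q j) := by
  rw [Cexpr, map_div₀, map_mul, map_mul,
    map_qPoch σ hσq, map_qPoch σ hσq, map_qPoch σ hσq, map_qPoch σ hσq]
  simp only [map_mul, map_pow, hσq, hσb]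
  rw [show b * q ^ 2 * q ^ (k + 1) = b * q ^ (k + 3) by ring,
      show b * q ^ 2 * q ^ (2 * k + 1) = b * q ^ (2 * k + 3) by ring]

include hτb hτq in
lemma tau_C (k j : ℕ) : τ (Cexpr b q k j) =
    qPoch (q ^ (k + 1)) q j * qPoch (b * q ^ (k + 2)) q j /
      (qPoch q q j * qPoch (b * q ^ (2 * k + 2)) q j) := by
  rw [Cexpr, map_div₀, map_mul, map_mul,
    map_qPoch τ hτq, map_qPoch τ hτq, map_qPoch τ hτq, map_qPoch τ hτq]
  simp only [map_mul, map_pow, hτq, hτb]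
  rw [show b * q * q ^ (k + 1) = b * q ^ (k + 2) by ring,
      show b * q * q ^ (2 * k + 1) = b * q ^ (2 * k + 2) by ring]

include hσb hσq in
lemma sigma_d (k : ℕ) : σ (dd b q k) = q ^ k * (1 - b * q ^ 3) / (1 - b * q ^ (2 * k + 3)) := by
  rw [dd, map_div₀]
  simp only [map_mul, map_sub, map_one, map_pow, hσq, hσb]
  rw [show b * q ^ 2 * q = b * q ^ 3 by ring,
      show b * q ^ 2 * q ^ (2 * k + 1) = b * q ^ (2 * k + 3) by ring]

end maps

section keyrec
variable {K : Type*} [Field K] {b q : K} (σ τ : K →+* K)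
  (hσb : σ b = b * q ^ 2) (hσq : σ q = q) (hτb : τ b = b * q) (hτq : τ q = q)
  (hq1 : ∀ m : ℕ, q ^ (m + 1) ≠ 1) (hbq : ∀ m : ℕ, 1 - b * q ^ m ≠ 0)

include hσb hσq hτb hτq hq1 hbq in
lemma key_rec (k m : ℕ) :
    Cexpr b q (k + 1) (m + 1) =
      σ (Cexpr b q k (m + 1)) + τ (Cexpr b q (k + 1) m) * dd b q (k + 1) := by
  rw [sigma_C σ hσb hσq, tau_C τ hτb hτq, Cexpr, dd]
  rw [show 2 * (k + 1) + 1 = 2 * k + 3 from by ring,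
      show 2 * (k + 1) + 2 = 2 * k + 4 from by ring,
      show k + 1 + 1 = k + 2 from rfl,
      show k + 1 + 2 = k + 3 from rfl]
  rw [qPoch_succ (q ^ (k + 2)) q m,
      qPoch_succ' (b * q ^ (k + 2)) q m,
      qPoch_succ' (q ^ (k + 1)) q m,
      qPoch_succ (b * q ^ (k + 3)) q m,
      qPoch_succ q q m,
      qPoch_succ' (b * q ^ (2 * k + 3)) q m]
  rw [show b * q ^ (k + 2) * q = b * q ^ (k + 3) from by ring,
      show q ^ (k + 1) * q = q ^ (k + 2) from by ring,
      show b * q ^ (2 * k + 3) * q = b * q ^ (2 * k + 4) from by ring]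
  have hA := qPoch_q_ne hq1 m
  have hB := qPoch_b_ne hbq (2 * k + 4) m
  have h1 : (1 : K) - q * q ^ m ≠ 0 := by
    rw [show q * q ^ m = q ^ (m + 1) from by ring]; exact hq1' hq1 m
  have h2 := hbq (2 * k + 3)
  have h1'' : (1 : K) - q ^ m * q ≠ 0 := by rwa [mul_comm]
  field_simp
  ring

include hσb hσq hbq in
lemma dd_rec (k : ℕ) :
    q * (1 - b * q) / (1 - b * q ^ 3) * σ (dd b q k) = dd b q (k + 1) := by
  rw [sigma_d σ hσb hσq, dd, show 2 * (k + 1) + 1 = 2 * k + 3 from by ring]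
  have h3 := hbq 3
  have h4 := hbq (2 * k + 3)
  have h3' : (1 : K) - q ^ 3 * b ≠ 0 := by rwa [mul_comm]
  field_simp
  ring

end keyrec


/-- The `(b;q)`-binomial theorem in `ℂ_{0,b;q}[x,y]`: for a field `K` of coefficients
(rational functions of `b`, `q`), a ring `R`, `ι : K →+* R`, elements `x, y : R` and shift
endomorphisms `σ` (with `σ(b) = bq²`, `σ(q) = q`) and `τ` (with `τ(b) = bq`, `τ(q) = q`)
realizing the relations `yx = q(1-bq)/(1-bq³)·xy`, `x·f(b) = f(bq²)·x`, `y·f(b) = f(bq)·y`,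
one has `(x+y)^n = ∑_{k=0}^n [n,k]_{0,b;q} x^k y^{n-k}` where
`[n,k]_{0,b;q} = (q^{1+k}, bq^{1+k};q)_{n-k} / (q, bq^{1+2k};q)_{n-k}`. -/
theorem stmt7 {K R : Type*} [Field K] [Ring R] (b q : K) (ι : K →+* R) (x y : R)
    (σ τ : K →+* K)
    (hσb : σ b = b * q ^ 2) (hσq : σ q = q)
    (hτb : τ b = b * q) (hτq : τ q = q)
    (hx : ∀ f : K, x * ι f = ι (σ f) * x)
    (hy : ∀ f : K, y * ι f = ι (τ f) * y)
    (hq0 : q ≠ 0) (hq1 : ∀ m : ℕ, q ^ (m + 1) ≠ 1)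
    (hbq : ∀ m : ℤ, 1 - b * q ^ m ≠ 0)
    (hyx : y * x = ι (q * (1 - b * q) / (1 - b * q ^ 3)) * (x * y))
    (n : ℕ) :
    (x + y) ^ n = ∑ k ∈ Finset.range (n + 1),
      ι (qPoch (q ^ (k + 1)) q (n - k) * qPoch (b * q ^ (k + 1)) q (n - k) /
          (qPoch q q (n - k) * qPoch (b * q ^ (2 * k + 1)) q (n - k))) *
        x ^ k * y ^ (n - k) := by
  have hbq' : ∀ m : ℕ, 1 - b * q ^ m ≠ 0 := fun m => by
    have := hbq (m : ℤ); rwa [zpow_natCast] at this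
  -- commutation of y with powers of x
  have hyxk : ∀ k : ℕ, y * x ^ k = ι (dd b q k) * (x ^ k * y) := by
    intro k
    induction k with
    | zero => simp [dd_zero hbq']
    | succ k ihk =>
      rw [pow_succ']
      calc y * (x * x ^ k) = (y * x) * x ^ k := by rw [mul_assoc]
        _ = ι (q * (1 - b * q) / (1 - b * q ^ 3)) * (x * (y * x ^ k)) := by
              rw [hyx, mul_assoc, mul_assoc]
        _ = ι (q * (1 - b * q) / (1 - b * q ^ 3)) *
              (x * (ι (dd b q k) * (x ^ k * y))) := by rw [ihk]
        _ = ι (q * (1 - b * q) / (1 - b * q ^ 3)) *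
              ((ι (σ (dd b q k)) * x) * (x ^ k * y)) := by rw [← mul_assoc x, hx]
        _ = ι (q * (1 - b * q) / (1 - b * q ^ 3)) * ι (σ (dd b q k)) *
              (x * x ^ k * y) := by simp only [mul_assoc]
        _ = ι (dd b q (k + 1)) * (x * x ^ k * y) := by
              rw [← map_mul, dd_rec σ hσb hσq hbq' k]
        _ = ι (dd b q (k + 1)) * (x * x ^ k * y) := rfl
  have main : ∀ N : ℕ, (x + y) ^ N = ∑ k ∈ Finset.range (N + 1),
      ι (Cexpr b q k (N - k)) * x ^ k * y ^ (N - k) := by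
    intro N
    induction N with
    | zero => simp [Cexpr, qPoch_zero]
    | succ N ih =>
      have hsum : (x + y) ^ (N + 1) =
          (∑ k ∈ Finset.range (N + 1), ι (σ (Cexpr b q k (N - k))) * x ^ (k + 1) * y ^ (N - k))
          + ∑ k ∈ Finset.range (N + 1),
              ι (τ (Cexpr b q k (N - k)) * dd b q k) * x ^ k * y ^ (N - k + 1) := by
        rw [pow_succ', ih, add_mul, Finset.mul_sum, Finset.mul_sum]
        congr 1
        · apply Finset.sum_congr rfl
          intro k _
          rw [pow_succ']
          calc x * (ι (Cexpr b q k (N - k)) * x ^ k * y ^ (N - k))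
              = (x * ι (Cexpr b q k (N - k))) * (x ^ k * y ^ (N - k)) := by
                simp only [mul_assoc]
            _ = (ι (σ (Cexpr b q k (N - k))) * x) * (x ^ k * y ^ (N - k)) := by rw [hx]
            _ = ι (σ (Cexpr b q k (N - k))) * (x * x ^ k) * y ^ (N - k) := by
                simp only [mul_assoc]
        · apply Finset.sum_congr rfl
          intro k _
          calc y * (ι (Cexpr b q k (N - k)) * x ^ k * y ^ (N - k))
              = (y * ι (Cexpr b q k (N - k))) * (x ^ k * y ^ (N - k)) := by
                simp only [mul_assoc]
            _ = (ι (τ (Cexpr b q k (N - k))) * y) * (x ^ k * y ^ (N - k)) := by rw [hy]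
            _ = ι (τ (Cexpr b q k (N - k))) * ((y * x ^ k) * y ^ (N - k)) := by
                simp only [mul_assoc]
            _ = ι (τ (Cexpr b q k (N - k))) * ((ι (dd b q k) * (x ^ k * y)) * y ^ (N - k)) := by
                rw [hyxk]
            _ = ι (τ (Cexpr b q k (N - k))) * ι (dd b q k) * x ^ k * (y * y ^ (N - k)) := by
                simp only [mul_assoc]
            _ = ι (τ (Cexpr b q k (N - k)) * dd b q k) * x ^ k * y ^ (N - k + 1) := by
                rw [map_mul, pow_succ']
      have hmid : ∀ k ∈ Finset.range N,
          ι (Cexpr b q (k + 1) (N + 1 - (k + 1))) * x ^ (k + 1) * y ^ (N + 1 - (k + 1))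
          = ι (σ (Cexpr b q k (N - k))) * x ^ (k + 1) * y ^ (N - k)
            + ι (τ (Cexpr b q (k + 1) (N - (k + 1))) * dd b q (k + 1)) * x ^ (k + 1)
              * y ^ (N - (k + 1) + 1) := by
        intro k hk
        have hk' : k < N := Finset.mem_range.mp hk
        obtain ⟨m, hm⟩ : ∃ m, N - k = m + 1 := ⟨N - k - 1, by omega⟩
        have e1 : N + 1 - (k + 1) = m + 1 := by omega
        have e2 : N - (k + 1) = m := by omega
        rw [e1, hm, e2]
        rw [key_rec σ τ hσb hσq hτb hτq hq1 hbq' k m, map_add, add_mul, add_mul]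
      rw [hsum, Finset.sum_range_succ, Finset.sum_range_succ', Finset.sum_range_succ',
        Finset.sum_range_succ]
      beta_reduce
      rw [Finset.sum_congr rfl hmid, Finset.sum_add_distrib]
      rw [Nat.sub_self, Nat.sub_zero, Nat.sub_self, Nat.sub_zero]
      rw [Cexpr_top, Cexpr_top, Cexpr_zero hq1 hbq', Cexpr_zero hq1 hbq',
        dd_zero hbq', map_one, map_one, mul_one, map_one, map_one]
      simp only [pow_zero, one_mul, mul_one]
      abel
  have := main n
  simpa [Cexpr] using this
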